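/- Let (X, 𝒜, μ) be a measure space, g : X → [0,∞) a measurable integrable function, and u ≥ 0. Let D be a measurable set with {g > u} ⊂ D ⊂ {g ≥ u}. Then for every measurable set K with μ(K) = μ(D), one has ∫_K g dμ ≤ ∫_D g dμ. -/

import Mathlib

open MeasureTheory Set

theorem stmt13 {X : Type*} [MeasurableSpace X] (μ : Measure X)
    (g : X → ℝ) (hmeas : Measurable g) (hnn : ∀ x, 0 ≤ g x)
    (hint : Integrable g μ) (u : ℝ) (hu : 0 ≤ u)
    (D : Set X) (hD : MeasurableSet D)
    (h1 : {x | u < g x} ⊆ D) (h2 : D ⊆ {x | u ≤ g x})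
    (K : Set X) (hK : MeasurableSet K) (hμ : μ K = μ D) :
    (∫ x in K, g x ∂μ) ≤ ∫ x in D, g x ∂μ := by
  rcases eq_or_lt_of_le hu with hu0 | hu0
  · -- u = 0 : D contains the support of g
    have hDeq : ∫ x in D, g x ∂μ = ∫ x, g x ∂μ := by
      apply setIntegral_eq_integral_of_forall_compl_eq_zero
      intro x hx
      have : ¬ u < g x := fun h => hx (h1 h)
      have := hnn x
      linarith [le_of_not_gt ‹¬ u < g x›]
    rw [hDeq]
    exact setIntegral_le_integral hint (Filter.Eventually.of_forall hnn)
  · -- u > 0 : D has finite measure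
    have hDfin : μ D < ⊤ :=
      lt_of_le_of_lt (measure_mono h2) (hint.measure_ge_lt_top hu0)
    have hKfin : μ K < ⊤ := by rw [hμ]; exact hDfin
    have hKD : MeasurableSet (K \ D) := hK.diff hD
    have hDK : MeasurableSet (D \ K) := hD.diff hK
    have hinterfin : μ (K ∩ D) < ⊤ :=
      lt_of_le_of_lt (measure_mono inter_subset_right) hDfin
    -- equality of measures of the differences
    have hmeq : μ (K \ D) = μ (D \ K) := by
      have e1 : μ (K \ D) + μ (K ∩ D) = μ K := measure_diff_add_inter K hD
      have e2 : μ (D \ K) + μ (D ∩ K) = μ D := measure_diff_add_inter D hK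
      rw [inter_comm] at e2
      have : μ (K \ D) + μ (K ∩ D) = μ (D \ K) + μ (K ∩ D) := by
        rw [e1, e2, hμ]
      exact WithTop.add_right_cancel hinterfin.ne this
    have hKDfin : μ (K \ D) < ⊤ :=
      lt_of_le_of_lt (measure_mono diff_subset) hKfin
    have hDKfin : μ (D \ K) < ⊤ :=
      lt_of_le_of_lt (measure_mono diff_subset) hDfin
    -- split integrals
    have hsplitK : (∫ x in K, g x ∂μ) = (∫ x in K ∩ D, g x ∂μ) + ∫ x in K \ D, g x ∂μ := by
      rw [← setIntegral_union (disjoint_sdiff_self_right.mono_left inter_subset_right) hKD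
        (hint.integrableOn) (hint.integrableOn), inter_union_diff]
    have hsplitD : (∫ x in D, g x ∂μ) = (∫ x in K ∩ D, g x ∂μ) + ∫ x in D \ K, g x ∂μ := by
      rw [← setIntegral_union (disjoint_sdiff_self_right.mono_left inter_subset_left) hDK
        (hint.integrableOn) (hint.integrableOn), inter_comm, inter_union_diff]
    rw [hsplitK, hsplitD]
    have hconstKD : IntegrableOn (fun _ : X => u) (K \ D) μ :=
      integrableOn_const hKDfin.ne
    have hconstDK : IntegrableOn (fun _ : X => u) (D \ K) μ :=
      integrableOn_const hDKfin.ne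
    have b1 : (∫ x in K \ D, g x ∂μ) ≤ (μ (K \ D)).toReal * u := by
      calc (∫ x in K \ D, g x ∂μ) ≤ ∫ _ in K \ D, u ∂μ := by
            apply setIntegral_mono_on hint.integrableOn hconstKD hKD
            intro x hx
            have : x ∉ {x | u < g x} := fun h => hx.2 (h1 h)
            exact le_of_not_gt this
        _ = (μ (K \ D)).toReal * u := by simp [integral_const, mul_comm, measureReal_def]
    have b2 : (μ (D \ K)).toReal * u ≤ ∫ x in D \ K, g x ∂μ := by
      calc (μ (D \ K)).toReal * u = ∫ _ in D \ K, u ∂μ := by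
            simp [integral_const, mul_comm, measureReal_def]
        _ ≤ ∫ x in D \ K, g x ∂μ := by
            apply setIntegral_mono_on hconstDK hint.integrableOn hDK
            intro x hx
            exact h2 hx.1
    have : (μ (K \ D)).toReal = (μ (D \ K)).toReal := by rw [hmeq]
    rw [this] at b1
    linarith
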